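/- Let U be a regular subgroup of G not contained in S_h × S_n × {id}, let (p^j)_{j ∈ P^U} be a system of representatives of the U-orbits of P, let (φ_*, ψ_*, ρ_0) ∈ U, and let C be a U-consistent social choice correspondence. For j ∈ P_1^U let A^1_C(p^j) = {(y,z) ∈ C(p^j) × C(p^{j (φ_*,ψ_*,ρ_0)}) : z ≠ ψ_*(y)}, and for j ∈ P_2^U let ψ_j be the unique permutation in S_n such that Stab_U(p^j) ⊆ (S_h × {id} × {id}) ∪ (S_h × {ψ_j} × {ρ_0}) and A^2_C(p^j) = {x ∈ C(p^j) : ψ_j(x) ≠ x}. Then the number of resolute U-consistent refinements of C equals the product over j ∈ P_1^U of |A^1_C(p^j)| times the product over j ∈ P_2^U of |A^2_C(p^j)| (with empty products equal to 1), and this number is positive; in particular, C admits at least one resolute U-consistent refinement. -/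

import Mathlib

/-!
Common framework: preferences on `n ≥ 2` alternatives (`Fin n`) expressed by `h ≥ 2`
individuals (`Fin h`).  Following the paper, a linear order `q ∈ L(N)` is identified with
the permutation of `Fin n` sending each rank position (`0` = best) to the alternative
occupying that position.
-/

/-- A preference relation (a linear order on the set `Fin n` of alternatives), identified
with the permutation sending each rank position (`0` = best) to the alternative at
that position. -/
abbrev Pref (n : ℕ) := Equiv.Perm (Fin n)

/-- `x ⪰_q y` : alternative `x` is weakly preferred to `y` in `q`. -/
def prefGE {n : ℕ} (q : Pref n) (x y : Fin n) : Prop := q.symm x ≤ q.symm y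

/-- `x ≻_q y` : alternative `x` is strictly preferred to `y` in `q`. -/
def prefGT {n : ℕ} (q : Pref n) (x y : Fin n) : Prop := q.symm x < q.symm y

instance {n : ℕ} (q : Pref n) (x y : Fin n) : Decidable (prefGT q x y) :=
  inferInstanceAs (Decidable (q.symm x < q.symm y))

/-- A preference profile: one preference relation for each individual. -/
abbrev Profile (n h : ℕ) := Fin h → Pref n

/-- A social choice correspondence (the nonemptiness of its values is `IsSCC`). -/
abbrev SCC (n h : ℕ) := Profile n h → Set (Fin n)

/-- `C` has nonempty values, i.e. `C` really is a social choice correspondence. -/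
def IsSCC {n h : ℕ} (C : SCC n h) : Prop := ∀ p, (C p).Nonempty

/-- `C` is resolute: it always selects exactly one alternative. -/
def Resolute {n h : ℕ} (C : SCC n h) : Prop := ∀ p, ∃ x, C p = {x}

/-- `C'` is a refinement of `C`. -/
def Refines {n h : ℕ} (C' C : SCC n h) : Prop := ∀ p, C' p ⊆ C p

/-- The order-reversing permutation `ρ₀ : r ↦ n - r + 1`. -/
def rho0 (n : ℕ) : Equiv.Perm (Fin n) := Fin.revPerm

/-- The profile `p^{(id,id,ρ₀)}` obtained from `p` by reversing every individual
preference. -/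
def revProfile {n h : ℕ} (p : Profile n h) : Profile n h := fun i => p i * rho0 n

/-- `C` is immune to the reversal bias. -/
def Immune {n h : ℕ} (C : SCC n h) : Prop :=
  ∀ (p : Profile n h) (x : Fin n), C p = {x} → C (revProfile p) ≠ C p

/-- `Y` is a partition: nonempty, pairwise disjoint, covering blocks. -/
def IsPartition {α : Type*} {s : ℕ} (Y : Fin s → Finset α) : Prop :=
  (∀ j, (Y j).Nonempty) ∧ (∀ j k, j ≠ k → Disjoint (Y j) (Y k)) ∧ (∀ a, ∃ j, a ∈ Y j)

/-- The ambient group `S_h × S_n × S_n` (the third component is meant to range in `Ω`). -/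
abbrev Amb (n h : ℕ) := Equiv.Perm (Fin h) × Equiv.Perm (Fin n) × Equiv.Perm (Fin n)

/-- The action `p ↦ p^g` of `g = (φ,ψ,ρ)` on profiles. -/
def gact {n h : ℕ} (g : Amb n h) (p : Profile n h) : Profile n h :=
  fun i => g.2.1 * p (g.1⁻¹ i) * g.2.2

/-- The group `Ω = {id, ρ₀}`. -/
def OmegaGrp (n : ℕ) : Subgroup (Equiv.Perm (Fin n)) := Subgroup.zpowers (rho0 n)

/-- The group `G = S_h × S_n × Ω`. -/
def bigG (n h : ℕ) : Subgroup (Amb n h) :=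
  (⊤ : Subgroup (Equiv.Perm (Fin h))).prod
    ((⊤ : Subgroup (Equiv.Perm (Fin n))).prod (OmegaGrp n))

/-- `U`-consistency of a social choice correspondence `C`: for every `p` and every
`(φ,ψ,ρ) ∈ U`, if `ρ = id` then `C(p^{(φ,ψ,id)}) = ψ C(p)`, and if `ρ = ρ₀` and
`|C(p)| = 1` then `C(p^{(φ,ψ,ρ₀)}) ≠ ψ C(p)`. -/
def UConsistent {n h : ℕ} (U : Subgroup (Amb n h)) (C : SCC n h) : Prop :=
  ∀ (p : Profile n h), ∀ g ∈ U,
    (g.2.2 = 1 → C (gact g p) = g.2.1 '' C p) ∧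
    (g.2.2 = rho0 n → ∀ x : Fin n, C p = {x} → C (gact g p) ≠ g.2.1 '' C p)

/-- A subgroup `U` of `G` is regular: for every profile `p` there is `ψ⋆ ∈ S_n`
conjugate to `ρ₀` with `Stab_U(p) ⊆ (S_h × {id} × {id}) ∪ (S_h × {ψ⋆} × {ρ₀})`. -/
def RegularSubgroup {n h : ℕ} (U : Subgroup (Amb n h)) : Prop :=
  ∀ p : Profile n h, ∃ ψs : Equiv.Perm (Fin n), IsConj (rho0 n) ψs ∧
    ∀ g ∈ U, gact g p = p →
      (g.2.1 = 1 ∧ g.2.2 = 1) ∨ (g.2.1 = ψs ∧ g.2.2 = rho0 n)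

/-- `p` and `q` lie in the same `U`-orbit. -/
def SameOrbit {n h : ℕ} (U : Subgroup (Amb n h)) (p q : Profile n h) : Prop :=
  ∃ g ∈ U, gact g p = q

/-- `S` is a system of representatives of the `U`-orbits: every profile is in the
orbit of exactly one element of `S`. -/
def IsRepSystem {n h : ℕ} (U : Subgroup (Amb n h)) (S : Set (Profile n h)) : Prop :=
  ∀ p : Profile n h, ∃! r, r ∈ S ∧ SameOrbit U r p

/-- The stabilizer of `r` in `U` is contained in `S_h × S_n × {id}` (i.e. the
`U`-orbit of `r` belongs to `P₁ᵁ`). -/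
def StabIn1 {n h : ℕ} (U : Subgroup (Amb n h)) (r : Profile n h) : Prop :=
  ∀ g ∈ U, gact g r = r → g.2.2 = 1

lemma rho0_sq (n : ℕ) : rho0 n * rho0 n = 1 := by
  ext i; simp [rho0]

lemma rho0_inv (n : ℕ) : (rho0 n)⁻¹ = rho0 n := by
  rw [eq_comm, eq_inv_iff_mul_eq_one, rho0_sq]

lemma rho0_ne_one {n : ℕ} (hn : 2 ≤ n) : rho0 n ≠ 1 := by
  intro h1
  have h0 : (0 : ℕ) < n := by omega
  have := congrArg (fun e : Equiv.Perm (Fin n) => (e ⟨0, h0⟩).val) h1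
  simp [rho0, Fin.rev] at this
  omega

lemma mem_omega {n : ℕ} {x : Equiv.Perm (Fin n)} (hx : x ∈ OmegaGrp n) :
    x = 1 ∨ x = rho0 n := by
  obtain ⟨k, hk⟩ := Subgroup.mem_zpowers_iff.mp hx
  rcases Int.even_or_odd k with ⟨m, rfl⟩ | ⟨m, rfl⟩
  · left
    rw [← hk, ← two_mul, zpow_mul]
    have : (rho0 n) ^ (2:ℤ) = 1 := by rw [zpow_two, rho0_sq]
    rw [this, one_zpow]
  · right
    rw [← hk, zpow_add, zpow_mul, zpow_one]
    have : (rho0 n) ^ (2:ℤ) = 1 := by rw [zpow_two, rho0_sq]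
    rw [this, one_zpow, one_mul]

lemma rho_mem {n h : ℕ} {U : Subgroup (Amb n h)} (hUG : U ≤ bigG n h)
    {g : Amb n h} (hg : g ∈ U) : g.2.2 = 1 ∨ g.2.2 = rho0 n := by
  have := hUG hg
  rw [bigG, Subgroup.mem_prod] at this
  exact mem_omega (Subgroup.mem_prod.mp this.2).2

lemma gact_one {n h : ℕ} (p : Profile n h) : gact 1 p = p := by
  funext i; simp [gact]

lemma gact_mul {n h : ℕ} {g g' : Amb n h}
    (hc : g.2.2 * g'.2.2 = g'.2.2 * g.2.2) (p : Profile n h) :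
    gact (g * g') p = gact g (gact g' p) := by
  funext i
  simp only [gact, Prod.fst_mul, Prod.snd_mul, mul_inv_rev, Equiv.Perm.mul_apply]
  rw [hc]
  group

lemma omega_comm {n : ℕ} {x y : Equiv.Perm (Fin n)} (hx : x = 1 ∨ x = rho0 n)
    (hy : y = 1 ∨ y = rho0 n) : x * y = y * x := by
  rcases hx with rfl | rfl <;> rcases hy with rfl | rfl <;> simp

lemma gact_mulU {n h : ℕ} {U : Subgroup (Amb n h)} (hUG : U ≤ bigG n h)
    {g g' : Amb n h} (hg : g ∈ U) (hg' : g' ∈ U) (p : Profile n h) :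
    gact (g * g') p = gact g (gact g' p) :=
  gact_mul (omega_comm (rho_mem hUG hg) (rho_mem hUG hg')) p

lemma gact_cancel {n h : ℕ} {U : Subgroup (Amb n h)} (hUG : U ≤ bigG n h)
    {g : Amb n h} (hg : g ∈ U) (p : Profile n h) :
    gact g⁻¹ (gact g p) = p := by
  rw [← gact_mulU hUG (inv_mem hg) hg, inv_mul_cancel, gact_one]

lemma conj_sq_one {n : ℕ} {ψ : Equiv.Perm (Fin n)} (hc : IsConj (rho0 n) ψ) :
    ψ * ψ = 1 := by
  obtain ⟨c, hc⟩ := isConj_iff.mp hc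
  rw [← hc]
  group
  rw [mul_assoc c, rho0_sq]
  group

lemma rho0_fix {n : ℕ} {i j : Fin n} (hi : rho0 n i = i) (hj : rho0 n j = j) :
    i = j := by
  have h1 : (rho0 n i).val = i.val := congrArg Fin.val hi
  have h2 : (rho0 n j).val = j.val := congrArg Fin.val hj
  simp only [rho0, Fin.revPerm_apply, Fin.val_rev] at h1 h2
  have := i.isLt; have := j.isLt
  exact Fin.ext (by omega)

lemma conj_fix {n : ℕ} {ψ : Equiv.Perm (Fin n)} (hc : IsConj (rho0 n) ψ)
    {x y : Fin n} (hx : ψ x = x) (hy : ψ y = y) : x = y := by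
  obtain ⟨c, hc⟩ := isConj_iff.mp hc
  subst hc
  simp only [Equiv.Perm.mul_apply] at hx hy
  have hx' : rho0 n (c⁻¹ x) = c⁻¹ x := by
    have := congrArg (c⁻¹ ·) hx
    simpa using this
  have hy' : rho0 n (c⁻¹ y) = c⁻¹ y := by
    have := congrArg (c⁻¹ ·) hy
    simpa using this
  have h2 : c (c⁻¹ x) = c (c⁻¹ y) := congrArg (c ·) (rho0_fix hx' hy')
  simpa using h2


section Construction

open scoped Classical

variable {n h : ℕ} (U : Subgroup (Amb n h)) (S : Finset (Profile n h))
  (hS : IsRepSystem U ↑S)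

noncomputable def st13rep (p : Profile n h) : Profile n h :=
  (hS p).exists.choose

lemma st13rep_mem (p : Profile n h) : st13rep U S hS p ∈ S :=
  (hS p).exists.choose_spec.1

lemma st13rep_orbit (p : Profile n h) : SameOrbit U (st13rep U S hS p) p :=
  (hS p).exists.choose_spec.2

lemma st13rep_eq {r : Profile n h} (hr : r ∈ S) {p : Profile n h}
    (horb : SameOrbit U r p) : st13rep U S hS p = r :=
  (hS p).unique ⟨st13rep_mem U S hS p, st13rep_orbit U S hS p⟩ ⟨hr, horb⟩

noncomputable def st13g (p : Profile n h) : Amb n h :=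
  (st13rep_orbit U S hS p).choose

lemma st13g_mem (p : Profile n h) : st13g U S hS p ∈ U :=
  (st13rep_orbit U S hS p).choose_spec.1

lemma st13g_act (p : Profile n h) : gact (st13g U S hS p) (st13rep U S hS p) = p :=
  (st13rep_orbit U S hS p).choose_spec.2

variable (gs : Amb n h) (C : SCC n h) (ψj : Profile n h → Equiv.Perm (Fin n))

/-- The type of admissible choice data. -/
def st13D : Type :=
  ((r : {r : Profile n h // r ∈ S.filter fun r => StabIn1 U r}) →
     {yz : Fin n × Fin n // yz.1 ∈ C r.1 ∧ yz.2 ∈ C (gact gs r.1) ∧ yz.2 ≠ gs.2.1 yz.1}) ×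
  ((r : {r : Profile n h // r ∈ S.filter fun r => ¬ StabIn1 U r}) →
     {a : Fin n // a ∈ C r.1 ∧ ψj r.1 a ≠ a})

lemma st13psij_spec (hUG : U ≤ bigG n h) (hreg : RegularSubgroup U)
    {r : Profile n h} (hnst : ¬ StabIn1 U r)
    (hj : ∀ g ∈ U, gact g r = r →
      (g.2.1 = 1 ∧ g.2.2 = 1) ∨ (g.2.1 = ψj r ∧ g.2.2 = rho0 n)) :
    IsConj (rho0 n) (ψj r) ∧ ∃ t ∈ U, gact t r = r ∧ t.2.1 = ψj r ∧ t.2.2 = rho0 n := by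
  rw [StabIn1] at hnst
  push_neg at hnst
  obtain ⟨t, htU, htact, htne⟩ := hnst
  rcases hj t htU htact with ⟨h1, h2⟩ | ⟨h1, h2⟩
  · exact absurd h2 htne
  · obtain ⟨ψs, hconj, hstab⟩ := hreg r
    rcases hstab t htU htact with ⟨h1', h2'⟩ | ⟨h1', h2'⟩
    · exact absurd h2' htne
    · exact ⟨h1 ▸ h1' ▸ hconj, t, htU, htact, h1, h2⟩


/-- Junk element. -/
def st13junk (hn : 2 ≤ n) : Fin n := ⟨0, by omega⟩

/-- First selection (for orbits of type 1), made proof-free. -/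
noncomputable def st13y (hn : 2 ≤ n) (d : st13D U S gs C ψj) (r : Profile n h) :
    Fin n × Fin n :=
  if hst : r ∈ S.filter fun r => StabIn1 U r then (d.1 ⟨r, hst⟩).1
  else (st13junk hn, st13junk hn)

/-- Second selection (for orbits of type 2), made proof-free. -/
noncomputable def st13x (hn : 2 ≤ n) (d : st13D U S gs C ψj) (r : Profile n h) :
    Fin n :=
  if hst : r ∈ S.filter fun r => ¬ StabIn1 U r then (d.2 ⟨r, hst⟩).1
  else st13junk hn

lemma st13y_eq (hn : 2 ≤ n) (d : st13D U S gs C ψj) {r : Profile n h}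
    (hst : r ∈ S.filter fun r => StabIn1 U r) :
    st13y U S gs C ψj hn d r = (d.1 ⟨r, hst⟩).1 := dif_pos hst

lemma st13x_eq (hn : 2 ≤ n) (d : st13D U S gs C ψj) {r : Profile n h}
    (hst : r ∈ S.filter fun r => ¬ StabIn1 U r) :
    st13x U S gs C ψj hn d r = (d.2 ⟨r, hst⟩).1 := dif_pos hst

/-- The resolute scc determined by the choice data `d`. -/
noncomputable def st13F (hn : 2 ≤ n) (d : st13D U S gs C ψj) : SCC n h := fun p =>
  if StabIn1 U (st13rep U S hS p) then
    (if (st13g U S hS p).2.2 = 1 then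
       {(st13g U S hS p).2.1 (st13y U S gs C ψj hn d (st13rep U S hS p)).1}
     else
       {(st13g U S hS p).2.1 (gs.2.1⁻¹ (st13y U S gs C ψj hn d (st13rep U S hS p)).2)})
  else
    (if (st13g U S hS p).2.2 = 1 then
       {(st13g U S hS p).2.1 (st13x U S gs C ψj hn d (st13rep U S hS p))}
     else
       {(st13g U S hS p).2.1 (ψj (st13rep U S hS p)
          (st13x U S gs C ψj hn d (st13rep U S hS p)))})

lemma st13F_eval1 (hn : 2 ≤ n) (hUG : U ≤ bigG n h) (hreg : RegularSubgroup U)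
    (d : st13D U S gs C ψj) {r : Profile n h}
    (hrS : r ∈ S) (hst1 : StabIn1 U r)
    {g : Amb n h} (hg : g ∈ U) :
    st13F U S hS gs C ψj hn d (gact g r) =
      if g.2.2 = 1 then {g.2.1 (st13y U S gs C ψj hn d r).1}
      else {g.2.1 (gs.2.1⁻¹ (st13y U S gs C ψj hn d r).2)} := by
  set p := gact g r with hp
  have hrep : st13rep U S hS p = r := st13rep_eq U S hS hrS ⟨g, hg, rfl⟩
  set g0 := st13g U S hS p with hg0def
  have hg0 : g0 ∈ U := st13g_mem U S hS p
  have hact : gact g0 r = p := by rw [← hrep]; exact st13g_act U S hS p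
  set s := g0⁻¹ * g with hsdef
  have hsU : s ∈ U := mul_mem (inv_mem hg0) hg
  have hsact : gact s r = r := by
    rw [hsdef, gact_mulU hUG (inv_mem hg0) hg, ← hp, ← hact, gact_cancel hUG hg0]
  have hρs : s.2.2 = 1 := hst1 s hsU hsact
  obtain ⟨ψs, hconj, hstab⟩ := hreg r
  have hψs : s.2.1 = 1 := by
    rcases hstab s hsU hsact with ⟨h1, h2⟩ | ⟨h1, h2⟩
    · exact h1
    · exact absurd (h2.symm.trans hρs) (rho0_ne_one hn)
  have hgg : g = g0 * s := by rw [hsdef]; group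
  have hψeq : g.2.1 = g0.2.1 := by
    rw [hgg]; show g0.2.1 * s.2.1 = g0.2.1; rw [hψs, mul_one]
  have hρeq : g.2.2 = g0.2.2 := by
    rw [hgg]; show g0.2.2 * s.2.2 = g0.2.2; rw [hρs, mul_one]
  rw [st13F]
  simp only [hrep, ← hg0def]
  rw [if_pos hst1, hψeq, hρeq]

lemma st13F_eval2 (hn : 2 ≤ n) (hUG : U ≤ bigG n h) (hreg : RegularSubgroup U)
    (d : st13D U S gs C ψj) {r : Profile n h}
    (hrS : r ∈ S) (hnst : ¬ StabIn1 U r)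
    (hj : ∀ g ∈ U, gact g r = r →
      (g.2.1 = 1 ∧ g.2.2 = 1) ∨ (g.2.1 = ψj r ∧ g.2.2 = rho0 n))
    {g : Amb n h} (hg : g ∈ U) :
    st13F U S hS gs C ψj hn d (gact g r) =
      if g.2.2 = 1 then {g.2.1 (st13x U S gs C ψj hn d r)}
      else {g.2.1 (ψj r (st13x U S gs C ψj hn d r))} := by
  have hsq : ∀ a, ψj r (ψj r a) = a := by
    have := conj_sq_one (st13psij_spec U ψj hUG hreg hnst hj).1
    intro a
    have := congrArg (fun e : Equiv.Perm (Fin n) => e a) this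
    simpa using this
  set p := gact g r with hp
  have hrep : st13rep U S hS p = r := st13rep_eq U S hS hrS ⟨g, hg, rfl⟩
  set g0 := st13g U S hS p with hg0def
  have hg0 : g0 ∈ U := st13g_mem U S hS p
  have hact : gact g0 r = p := by rw [← hrep]; exact st13g_act U S hS p
  set s := g0⁻¹ * g with hsdef
  have hsU : s ∈ U := mul_mem (inv_mem hg0) hg
  have hsact : gact s r = r := by
    rw [hsdef, gact_mulU hUG (inv_mem hg0) hg, ← hp, ← hact, gact_cancel hUG hg0]
  have hgg : g = g0 * s := by rw [hsdef]; group
  have hψeq : g.2.1 = g0.2.1 * s.2.1 := by rw [hgg]; rfl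
  have hρeq : g.2.2 = g0.2.2 * s.2.2 := by rw [hgg]; rfl
  rw [st13F]
  simp only [hrep, ← hg0def]
  rw [if_neg hnst]
  rcases hj s hsU hsact with ⟨h1, h2⟩ | ⟨h1, h2⟩
  · rw [hψeq, hρeq, h1, h2, mul_one, mul_one]
  · rw [h1] at hψeq
    rw [h2] at hρeq
    rcases rho_mem hUG hg0 with h0 | h0
    · -- g0 even, g odd
      have hgρ : g.2.2 ≠ 1 := by
        rw [hρeq, h0, one_mul]; exact rho0_ne_one hn
      rw [if_pos h0, if_neg hgρ, hψeq]
      simp [Equiv.Perm.mul_apply, hsq]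
    · -- g0 odd, g even
      have hg0ρ : g0.2.2 ≠ 1 := by rw [h0]; exact rho0_ne_one hn
      have hgρ : g.2.2 = 1 := by rw [hρeq, h0, rho0_sq]
      rw [if_neg hg0ρ, if_pos hgρ, hψeq]
      simp [Equiv.Perm.mul_apply, hsq]

lemma gact_shift {n h : ℕ} {U : Subgroup (Amb n h)} (hUG : U ≤ bigG n h)
    {g g' : Amb n h} (hg : g ∈ U) (hg' : g' ∈ U) (r : Profile n h) :
    gact (g * g'⁻¹) (gact g' r) = gact g r := by
  rw [← gact_mulU hUG (mul_mem hg (inv_mem hg')) hg',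
    inv_mul_cancel_right]

lemma st13F_resolute (hn : 2 ≤ n) (hUG : U ≤ bigG n h) (hreg : RegularSubgroup U)
    (hψj : ∀ r ∈ S, ¬ StabIn1 U r → ∀ g ∈ U, gact g r = r →
      (g.2.1 = 1 ∧ g.2.2 = 1) ∨ (g.2.1 = ψj r ∧ g.2.2 = rho0 n))
    (d : st13D U S gs C ψj) : Resolute (st13F U S hS gs C ψj hn d) := by
  intro p
  have hact := st13g_act U S hS p
  have hrS := st13rep_mem U S hS p
  have hgm := st13g_mem U S hS p
  by_cases hcase : StabIn1 U (st13rep U S hS p)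
  · rw [← hact, st13F_eval1 U S hS gs C ψj hn hUG hreg d hrS hcase hgm]
    split <;> exact ⟨_, rfl⟩
  · rw [← hact, st13F_eval2 U S hS gs C ψj hn hUG hreg d hrS hcase
      (hψj _ hrS hcase) hgm]
    split <;> exact ⟨_, rfl⟩

lemma st13F_refines (hn : 2 ≤ n) (hUG : U ≤ bigG n h) (hreg : RegularSubgroup U)
    (hgs : gs ∈ U) (hgs3 : gs.2.2 = rho0 n)
    (hcons : UConsistent U C)
    (hψj : ∀ r ∈ S, ¬ StabIn1 U r → ∀ g ∈ U, gact g r = r →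
      (g.2.1 = 1 ∧ g.2.2 = 1) ∨ (g.2.1 = ψj r ∧ g.2.2 = rho0 n))
    (d : st13D U S gs C ψj) : Refines (st13F U S hS gs C ψj hn d) C := by
  intro p
  have hact := st13g_act U S hS p
  have hrS := st13rep_mem U S hS p
  set r := st13rep U S hS p with hrdef
  set g0 := st13g U S hS p with hg0def
  have hgm : g0 ∈ U := st13g_mem U S hS p
  by_cases hcase : StabIn1 U r
  · have hst : r ∈ S.filter fun r => StabIn1 U r := Finset.mem_filter.mpr ⟨hrS, hcase⟩
    have hy := (d.1 ⟨r, hst⟩).2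
    rw [← hact, st13F_eval1 U S hS gs C ψj hn hUG hreg d hrS hcase hgm,
      st13y_eq U S gs C ψj hn d hst]
    rcases rho_mem hUG hgm with h0 | h0
    · rw [if_pos h0]
      rw [(hcons r g0 hgm).1 h0]
      rintro a rfl
      exact ⟨_, hy.1, rfl⟩
    · rw [if_neg (by rw [h0]; exact rho0_ne_one hn)]
      have hmem : g0 * gs⁻¹ ∈ U := mul_mem hgm (inv_mem hgs)
      have hρ : (g0 * gs⁻¹).2.2 = 1 := by
        show g0.2.2 * (gs⁻¹).2.2 = 1
        have : (gs⁻¹).2.2 = gs.2.2⁻¹ := rfl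
        rw [this, hgs3, rho0_inv, h0, rho0_sq]
      have := (hcons (gact gs r) (g0 * gs⁻¹) hmem).1 hρ
      rw [gact_shift hUG hgm hgs r] at this
      rw [this]
      rintro a rfl
      exact ⟨_, hy.2.1, rfl⟩
  · have hst : r ∈ S.filter fun r => ¬ StabIn1 U r := Finset.mem_filter.mpr ⟨hrS, hcase⟩
    have hx := (d.2 ⟨r, hst⟩).2
    obtain ⟨hconj, t, htU, htact, htψ, htρ⟩ :=
      st13psij_spec U ψj hUG hreg hcase (hψj r hrS hcase)
    have hinv : (ψj r)⁻¹ = ψj r := inv_eq_of_mul_eq_one_left (conj_sq_one hconj)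
    rw [← hact, st13F_eval2 U S hS gs C ψj hn hUG hreg d hrS hcase
      (hψj r hrS hcase) hgm, st13x_eq U S gs C ψj hn d hst]
    rcases rho_mem hUG hgm with h0 | h0
    · rw [if_pos h0]
      rw [(hcons r g0 hgm).1 h0]
      rintro a rfl
      exact ⟨_, hx.1, rfl⟩
    · rw [if_neg (by rw [h0]; exact rho0_ne_one hn)]
      have hmem : g0 * t⁻¹ ∈ U := mul_mem hgm (inv_mem htU)
      have hρ : (g0 * t⁻¹).2.2 = 1 := by
        show g0.2.2 * (t⁻¹).2.2 = 1
        have : (t⁻¹).2.2 = t.2.2⁻¹ := rfl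
        rw [this, htρ, rho0_inv, h0, rho0_sq]
      have := (hcons (gact t r) (g0 * t⁻¹) hmem).1 hρ
      rw [gact_shift hUG hgm htU r, htact] at this
      rw [this]
      rintro a rfl
      refine ⟨(d.2 ⟨r, hst⟩).1, hx.1, ?_⟩
      show (g0.2.1 * (t⁻¹).2.1) _ = _
      have h21 : (t⁻¹).2.1 = t.2.1⁻¹ := rfl
      rw [h21, htψ, hinv]
      rfl

lemma st13F_consistent (hn : 2 ≤ n) (hUG : U ≤ bigG n h) (hreg : RegularSubgroup U)
    (hψj : ∀ r ∈ S, ¬ StabIn1 U r → ∀ g ∈ U, gact g r = r →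
      (g.2.1 = 1 ∧ g.2.2 = 1) ∨ (g.2.1 = ψj r ∧ g.2.2 = rho0 n))
    (d : st13D U S gs C ψj) : UConsistent U (st13F U S hS gs C ψj hn d) := by
  intro p g hgU
  have hact := st13g_act U S hS p
  have hrS := st13rep_mem U S hS p
  set r := st13rep U S hS p with hrdef
  set g0 := st13g U S hS p with hg0def
  have hgm : g0 ∈ U := st13g_mem U S hS p
  have hmm : g * g0 ∈ U := mul_mem hgU hgm
  have hkey : gact g p = gact (g * g0) r := by
    rw [gact_mulU hUG hgU hgm, hact]
  have h21 : (g * g0).2.1 = g.2.1 * g0.2.1 := rfl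
  have h22 : (g * g0).2.2 = g.2.2 * g0.2.2 := rfl
  by_cases hcase : StabIn1 U r
  · have hst : r ∈ S.filter fun r => StabIn1 U r := Finset.mem_filter.mpr ⟨hrS, hcase⟩
    have hy := (d.1 ⟨r, hst⟩).2
    rw [← st13y_eq U S gs C ψj hn d hst] at hy
    have A := st13F_eval1 U S hS gs C ψj hn hUG hreg d hrS hcase hgm
    have B := st13F_eval1 U S hS gs C ψj hn hUG hreg d hrS hcase hmm
    rw [hact] at A
    constructor
    · intro hρ1
      rw [hkey, B, A]
      rcases rho_mem hUG hgm with h0 | h0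
      · have c1 : (g * g0).2.2 = 1 := by rw [h22, hρ1, h0, mul_one]
        rw [if_pos h0, if_pos c1, h21]
        simp [Set.image_singleton]
      · have c0 : g0.2.2 ≠ 1 := by rw [h0]; exact rho0_ne_one hn
        have c1 : (g * g0).2.2 ≠ 1 := by
          rw [h22, hρ1, h0, one_mul]; exact rho0_ne_one hn
        rw [if_neg c0, if_neg c1, h21]
        simp [Set.image_singleton]
    · intro hρ0 x hx
      rw [hkey, B, A]
      rcases rho_mem hUG hgm with h0 | h0
      · have c1 : (g * g0).2.2 ≠ 1 := by
          rw [h22, hρ0, h0, mul_one]; exact rho0_ne_one hn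
        rw [if_pos h0, if_neg c1, h21]
        simp only [Set.image_singleton, Set.singleton_eq_singleton_iff,
          Equiv.Perm.mul_apply, EmbeddingLike.apply_eq_iff_eq, ne_eq]
        intro heq
        exact hy.2.2 (by rw [← heq]; simp)
      · have c0 : g0.2.2 ≠ 1 := by rw [h0]; exact rho0_ne_one hn
        have c1 : (g * g0).2.2 = 1 := by rw [h22, hρ0, h0, rho0_sq]
        rw [if_neg c0, if_pos c1, h21]
        simp only [Set.image_singleton, Set.singleton_eq_singleton_iff,
          Equiv.Perm.mul_apply, EmbeddingLike.apply_eq_iff_eq, ne_eq]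
        intro heq
        exact hy.2.2 (by rw [heq]; simp)
  · have hst : r ∈ S.filter fun r => ¬ StabIn1 U r := Finset.mem_filter.mpr ⟨hrS, hcase⟩
    have hx2 := (d.2 ⟨r, hst⟩).2
    rw [← st13x_eq U S gs C ψj hn d hst] at hx2
    have A := st13F_eval2 U S hS gs C ψj hn hUG hreg d hrS hcase (hψj r hrS hcase) hgm
    have B := st13F_eval2 U S hS gs C ψj hn hUG hreg d hrS hcase (hψj r hrS hcase) hmm
    rw [hact] at A
    constructor
    · intro hρ1
      rw [hkey, B, A]
      rcases rho_mem hUG hgm with h0 | h0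
      · have c1 : (g * g0).2.2 = 1 := by rw [h22, hρ1, h0, mul_one]
        rw [if_pos h0, if_pos c1, h21]
        simp [Set.image_singleton]
      · have c0 : g0.2.2 ≠ 1 := by rw [h0]; exact rho0_ne_one hn
        have c1 : (g * g0).2.2 ≠ 1 := by
          rw [h22, hρ1, h0, one_mul]; exact rho0_ne_one hn
        rw [if_neg c0, if_neg c1, h21]
        simp [Set.image_singleton]
    · intro hρ0 x hx
      rw [hkey, B, A]
      rcases rho_mem hUG hgm with h0 | h0
      · have c1 : (g * g0).2.2 ≠ 1 := by
          rw [h22, hρ0, h0, mul_one]; exact rho0_ne_one hn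
        rw [if_pos h0, if_neg c1, h21]
        simp only [Set.image_singleton, Set.singleton_eq_singleton_iff,
          Equiv.Perm.mul_apply, EmbeddingLike.apply_eq_iff_eq, ne_eq]
        intro heq
        exact hx2.2 heq
      · have c0 : g0.2.2 ≠ 1 := by rw [h0]; exact rho0_ne_one hn
        have c1 : (g * g0).2.2 = 1 := by rw [h22, hρ0, h0, rho0_sq]
        rw [if_neg c0, if_pos c1, h21]
        simp only [Set.image_singleton, Set.singleton_eq_singleton_iff,
          Equiv.Perm.mul_apply, EmbeddingLike.apply_eq_iff_eq, ne_eq]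
        intro heq
        exact hx2.2 heq.symm

lemma st13F_at_rep1 (hn : 2 ≤ n) (hUG : U ≤ bigG n h) (hreg : RegularSubgroup U)
    (hgs : gs ∈ U) (hgs3 : gs.2.2 = rho0 n)
    (d : st13D U S gs C ψj) {r : Profile n h} (hrS : r ∈ S) (hst1 : StabIn1 U r) :
    st13F U S hS gs C ψj hn d r = {(st13y U S gs C ψj hn d r).1} ∧
    st13F U S hS gs C ψj hn d (gact gs r) = {(st13y U S gs C ψj hn d r).2} := by
  constructor
  · have A := st13F_eval1 U S hS gs C ψj hn hUG hreg d hrS hst1 (one_mem U)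
    rw [gact_one] at A
    have c : (1 : Amb n h).2.2 = (1 : Equiv.Perm (Fin n)) := rfl
    rw [A, if_pos c]
    simp
  · have A := st13F_eval1 U S hS gs C ψj hn hUG hreg d hrS hst1 hgs
    have c1 : gs.2.2 ≠ 1 := by rw [hgs3]; exact rho0_ne_one hn
    rw [A, if_neg c1]
    simp

lemma st13F_at_rep2 (hn : 2 ≤ n) (hUG : U ≤ bigG n h) (hreg : RegularSubgroup U)
    (d : st13D U S gs C ψj) {r : Profile n h} (hrS : r ∈ S) (hnst : ¬ StabIn1 U r)
    (hj : ∀ g ∈ U, gact g r = r →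
      (g.2.1 = 1 ∧ g.2.2 = 1) ∨ (g.2.1 = ψj r ∧ g.2.2 = rho0 n)) :
    st13F U S hS gs C ψj hn d r = {st13x U S gs C ψj hn d r} := by
  have A := st13F_eval2 U S hS gs C ψj hn hUG hreg d hrS hnst hj (one_mem U)
  rw [gact_one] at A
  have c : (1 : Amb n h).2.2 = (1 : Equiv.Perm (Fin n)) := rfl
  rw [A, if_pos c]
  simp

lemma st13F_injective (hn : 2 ≤ n) (hUG : U ≤ bigG n h) (hreg : RegularSubgroup U)
    (hgs : gs ∈ U) (hgs3 : gs.2.2 = rho0 n)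
    (hψj : ∀ r ∈ S, ¬ StabIn1 U r → ∀ g ∈ U, gact g r = r →
      (g.2.1 = 1 ∧ g.2.2 = 1) ∨ (g.2.1 = ψj r ∧ g.2.2 = rho0 n))
    {d d' : st13D U S gs C ψj}
    (heq : st13F U S hS gs C ψj hn d = st13F U S hS gs C ψj hn d') : d = d' := by
  have hy : ∀ (rs : {r : Profile n h // r ∈ S.filter fun r => StabIn1 U r}),
      d.1 rs = d'.1 rs := by
    rintro ⟨r, hst⟩
    obtain ⟨hrS, hst1⟩ := Finset.mem_filter.mp hst
    have A := st13F_at_rep1 U S hS gs C ψj hn hUG hreg hgs hgs3 d hrS hst1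
    have B := st13F_at_rep1 U S hS gs C ψj hn hUG hreg hgs hgs3 d' hrS hst1
    have e1 : (st13y U S gs C ψj hn d r).1 = (st13y U S gs C ψj hn d' r).1 :=
      Set.singleton_eq_singleton_iff.mp (A.1.symm.trans ((congrFun heq r).trans B.1))
    have e2 : (st13y U S gs C ψj hn d r).2 = (st13y U S gs C ψj hn d' r).2 :=
      Set.singleton_eq_singleton_iff.mp
        (A.2.symm.trans ((congrFun heq (gact gs r)).trans B.2))
    apply Subtype.ext
    rw [← st13y_eq U S gs C ψj hn d hst, ← st13y_eq U S gs C ψj hn d' hst]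
    exact Prod.ext e1 e2
  have hx : ∀ (rs : {r : Profile n h // r ∈ S.filter fun r => ¬ StabIn1 U r}),
      d.2 rs = d'.2 rs := by
    rintro ⟨r, hst⟩
    obtain ⟨hrS, hnst⟩ := Finset.mem_filter.mp hst
    have A := st13F_at_rep2 U S hS gs C ψj hn hUG hreg d hrS hnst (hψj r hrS hnst)
    have B := st13F_at_rep2 U S hS gs C ψj hn hUG hreg d' hrS hnst (hψj r hrS hnst)
    have e1 : st13x U S gs C ψj hn d r = st13x U S gs C ψj hn d' r :=
      Set.singleton_eq_singleton_iff.mp (A.symm.trans ((congrFun heq r).trans B))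
    apply Subtype.ext
    rw [← st13x_eq U S gs C ψj hn d hst, ← st13x_eq U S gs C ψj hn d' hst]
    exact e1
  exact Prod.ext (funext hy) (funext hx)

lemma st13F_surjective (hn : 2 ≤ n) (hUG : U ≤ bigG n h) (hreg : RegularSubgroup U)
    (hgs : gs ∈ U) (hgs3 : gs.2.2 = rho0 n)
    (hψj : ∀ r ∈ S, ¬ StabIn1 U r → ∀ g ∈ U, gact g r = r →
      (g.2.1 = 1 ∧ g.2.2 = 1) ∨ (g.2.1 = ψj r ∧ g.2.2 = rho0 n))
    (f : SCC n h) (hres : Resolute f) (href : Refines f C) (hconsf : UConsistent U f) :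
    ∃ d : st13D U S gs C ψj, st13F U S hS gs C ψj hn d = f := by
  classical
  set sel : Profile n h → Fin n := fun p => (hres p).choose with hseldef
  have hsel : ∀ p, f p = {sel p} := fun p => (hres p).choose_spec
  have hmemf : ∀ p, sel p ∈ f p := fun p => by rw [hsel p]; rfl
  have hmemC : ∀ p, sel p ∈ C p := fun p => href p (hmemf p)
  have hne1 : ∀ r : Profile n h, sel (gact gs r) ≠ gs.2.1 (sel r) := by
    intro r
    have := (hconsf r gs hgs).2 hgs3 (sel r) (hsel r)
    rw [hsel (gact gs r), hsel r, Set.image_singleton] at this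
    exact fun e => this (by rw [e])
  have hne2 : ∀ r : Profile n h, r ∈ S → ¬ StabIn1 U r → ψj r (sel r) ≠ sel r := by
    intro r hrS hnst
    obtain ⟨hconj, t, htU, htact, htψ, htρ⟩ :=
      st13psij_spec U ψj hUG hreg hnst (hψj r hrS hnst)
    have := (hconsf r t htU).2 htρ (sel r) (hsel r)
    rw [htact, hsel r, Set.image_singleton, htψ] at this
    exact fun e => this (by rw [e])
  refine ⟨⟨fun rs => ⟨(sel rs.1, sel (gact gs rs.1)), hmemC _, hmemC _, hne1 _⟩,
    fun rs => ⟨sel rs.1, hmemC _,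
      hne2 _ (Finset.mem_filter.mp rs.2).1 (Finset.mem_filter.mp rs.2).2⟩⟩, ?_⟩
  set d : st13D U S gs C ψj :=
    ⟨fun rs => ⟨(sel rs.1, sel (gact gs rs.1)), hmemC _, hmemC _, hne1 _⟩,
     fun rs => ⟨sel rs.1, hmemC _,
      hne2 _ (Finset.mem_filter.mp rs.2).1 (Finset.mem_filter.mp rs.2).2⟩⟩ with hddef
  funext p
  have hact := st13g_act U S hS p
  have hrS := st13rep_mem U S hS p
  set r := st13rep U S hS p with hrdef
  set g0 := st13g U S hS p with hg0def
  have hgm : g0 ∈ U := st13g_mem U S hS p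
  by_cases hcase : StabIn1 U r
  · have hst : r ∈ S.filter fun r => StabIn1 U r := Finset.mem_filter.mpr ⟨hrS, hcase⟩
    have hyval : st13y U S gs C ψj hn d r = (sel r, sel (gact gs r)) :=
      st13y_eq U S gs C ψj hn d hst
    rw [← hact, st13F_eval1 U S hS gs C ψj hn hUG hreg d hrS hcase hgm, hyval]
    rcases rho_mem hUG hgm with h0 | h0
    · rw [if_pos h0, (hconsf r g0 hgm).1 h0, hsel r, Set.image_singleton]
    · have c0 : g0.2.2 ≠ 1 := by rw [h0]; exact rho0_ne_one hn
      rw [if_neg c0]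
      have hmem : g0 * gs⁻¹ ∈ U := mul_mem hgm (inv_mem hgs)
      have hρ : (g0 * gs⁻¹).2.2 = 1 := by
        show g0.2.2 * (gs⁻¹).2.2 = 1
        have : (gs⁻¹).2.2 = gs.2.2⁻¹ := rfl
        rw [this, hgs3, rho0_inv, h0, rho0_sq]
      have hE := (hconsf (gact gs r) (g0 * gs⁻¹) hmem).1 hρ
      rw [gact_shift hUG hgm hgs r] at hE
      rw [hE, hsel (gact gs r), Set.image_singleton]
      rfl
  · have hst : r ∈ S.filter fun r => ¬ StabIn1 U r := Finset.mem_filter.mpr ⟨hrS, hcase⟩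
    have hxval : st13x U S gs C ψj hn d r = sel r :=
      st13x_eq U S gs C ψj hn d hst
    obtain ⟨hconj, t, htU, htact, htψ, htρ⟩ :=
      st13psij_spec U ψj hUG hreg hcase (hψj r hrS hcase)
    have hinv : (ψj r)⁻¹ = ψj r := inv_eq_of_mul_eq_one_left (conj_sq_one hconj)
    rw [← hact, st13F_eval2 U S hS gs C ψj hn hUG hreg d hrS hcase
      (hψj r hrS hcase) hgm, hxval]
    rcases rho_mem hUG hgm with h0 | h0
    · rw [if_pos h0, (hconsf r g0 hgm).1 h0, hsel r, Set.image_singleton]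
    · have c0 : g0.2.2 ≠ 1 := by rw [h0]; exact rho0_ne_one hn
      rw [if_neg c0]
      have hmem : g0 * t⁻¹ ∈ U := mul_mem hgm (inv_mem htU)
      have hρ : (g0 * t⁻¹).2.2 = 1 := by
        show g0.2.2 * (t⁻¹).2.2 = 1
        have : (t⁻¹).2.2 = t.2.2⁻¹ := rfl
        rw [this, htρ, rho0_inv, h0, rho0_sq]
      have hE := (hconsf (gact t r) (g0 * t⁻¹) hmem).1 hρ
      rw [gact_shift hUG hgm htU r, htact] at hE
      rw [hE, hsel r, Set.image_singleton]
      show _ = {(g0.2.1 * (t⁻¹).2.1) (sel r)}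
      have h21 : (t⁻¹).2.1 = t.2.1⁻¹ := rfl
      rw [h21, htψ, hinv]
      rfl

lemma st13A1_nonempty (hC : IsSCC C) (hcons : UConsistent U C)
    (hgs : gs ∈ U) (hgs3 : gs.2.2 = rho0 n) (r : Profile n h) :
    {yz : Fin n × Fin n |
      yz.1 ∈ C r ∧ yz.2 ∈ C (gact gs r) ∧ yz.2 ≠ gs.2.1 yz.1}.Nonempty := by
  obtain ⟨y, hy⟩ := hC r
  obtain ⟨z, hz⟩ := hC (gact gs r)
  by_cases hzz : z ≠ gs.2.1 y
  · exact ⟨(y, z), hy, hz, hzz⟩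
  push_neg at hzz
  by_cases hsing : C r = {y}
  · have hne := (hcons r gs hgs).2 hgs3 y hsing
    rw [hsing, Set.image_singleton] at hne
    by_contra hw
    rw [Set.not_nonempty_iff_eq_empty] at hw
    apply hne
    apply Set.eq_singleton_iff_unique_mem.mpr
    refine ⟨hzz ▸ hz, fun w hwmem => ?_⟩
    by_contra hwne
    exact (Set.eq_empty_iff_forall_notMem.mp hw (y, w)) ⟨hy, hwmem, hwne⟩
  · have hy' : ∃ y' ∈ C r, y' ≠ y := by
      by_contra hy'
      push_neg at hy'
      exact hsing (Set.eq_singleton_iff_unique_mem.mpr ⟨hy, hy'⟩)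
    obtain ⟨y', hy'mem, hy'ne⟩ := hy'
    refine ⟨(y', z), hy'mem, hz, fun e => ?_⟩
    exact hy'ne (gs.2.1.injective (hzz.symm.trans e)).symm

lemma st13A2_nonempty (hC : IsSCC C) (hcons : UConsistent U C)
    (hUG : U ≤ bigG n h) (hreg : RegularSubgroup U)
    {r : Profile n h} (hnst : ¬ StabIn1 U r)
    (hj : ∀ g ∈ U, gact g r = r →
      (g.2.1 = 1 ∧ g.2.2 = 1) ∨ (g.2.1 = ψj r ∧ g.2.2 = rho0 n)) :
    {a : Fin n | a ∈ C r ∧ ψj r a ≠ a}.Nonempty := by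
  obtain ⟨hconj, t, htU, htact, htψ, htρ⟩ := st13psij_spec U ψj hUG hreg hnst hj
  obtain ⟨y, hy⟩ := hC r
  by_cases h1 : ψj r y ≠ y
  · exact ⟨y, hy, h1⟩
  push_neg at h1
  by_cases hsing : C r = {y}
  · have hne := (hcons r t htU).2 htρ y hsing
    rw [htact, hsing, Set.image_singleton, htψ, h1] at hne
    exact absurd rfl hne
  · have hy' : ∃ y' ∈ C r, y' ≠ y := by
      by_contra hy'
      push_neg at hy'
      exact hsing (Set.eq_singleton_iff_unique_mem.mpr ⟨hy, hy'⟩)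
    obtain ⟨y', hy'mem, hy'ne⟩ := hy'
    refine ⟨y', hy'mem, fun hfix => ?_⟩
    exact hy'ne (conj_fix hconj hfix h1)


open scoped Classical in
/-- Theorem `fu-min-count2`: for a regular `U` not contained in
`S_h × S_n × {id}`, a system `S` of representatives of the `U`-orbits, a fixed
`gs = (φ*,ψ*,ρ₀) ∈ U` and a `U`-consistent scc `C`, the number of resolute
`U`-consistent refinements of `C` is
`(∏_{j ∈ P₁ᵁ} |A¹_C(p^j)|) * (∏_{j ∈ P₂ᵁ} |A²_C(p^j)|)`, and this number is positive;
in particular there is at least one such refinement. -/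
theorem statement13 {n h : ℕ} (hh : 2 ≤ h) (hn : 2 ≤ n)
    (U : Subgroup (Amb n h)) (hUG : U ≤ bigG n h) (hreg : RegularSubgroup U)
    (hU2 : ∃ g ∈ U, g.2.2 ≠ 1)
    (S : Finset (Profile n h)) (hS : IsRepSystem U ↑S)
    (gs : Amb n h) (hgs : gs ∈ U) (hgs3 : gs.2.2 = rho0 n)
    (C : SCC n h) (hC : IsSCC C) (hcons : UConsistent U C)
    (ψj : Profile n h → Equiv.Perm (Fin n))
    (hψj : ∀ r ∈ S, ¬ StabIn1 U r → ∀ g ∈ U, gact g r = r →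
      (g.2.1 = 1 ∧ g.2.2 = 1) ∨ (g.2.1 = ψj r ∧ g.2.2 = rho0 n)) :
    Nat.card {f : SCC n h // Resolute f ∧ Refines f C ∧ UConsistent U f} =
        (∏ r ∈ S.filter fun r => StabIn1 U r,
          {yz : Fin n × Fin n |
            yz.1 ∈ C r ∧ yz.2 ∈ C (gact gs r) ∧ yz.2 ≠ gs.2.1 yz.1}.ncard) *
        (∏ r ∈ S.filter fun r => ¬ StabIn1 U r,
          {a : Fin n | a ∈ C r ∧ ψj r a ≠ a}.ncard) ∧
      0 < Nat.card {f : SCC n h // Resolute f ∧ Refines f C ∧ UConsistent U f} ∧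
      ∃ f : SCC n h, Resolute f ∧ Refines f C ∧ UConsistent U f := by
  have hbij : Function.Bijective
      (fun d : st13D U S gs C ψj =>
        (⟨st13F U S hS gs C ψj hn d,
          st13F_resolute U S hS gs C ψj hn hUG hreg hψj d,
          st13F_refines U S hS gs C ψj hn hUG hreg hgs hgs3 hcons hψj d,
          st13F_consistent U S hS gs C ψj hn hUG hreg hψj d⟩ :
          {f : SCC n h // Resolute f ∧ Refines f C ∧ UConsistent U f})) := by
    constructor
    · intro d d' he
      exact st13F_injective U S hS gs C ψj hn hUG hreg hgs hgs3 hψj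
        (congrArg Subtype.val he)
    · rintro ⟨f, hres, href, hconsf⟩
      obtain ⟨d, hd⟩ := st13F_surjective U S hS gs C ψj hn hUG hreg hgs hgs3 hψj
        f hres href hconsf
      exact ⟨d, Subtype.ext hd⟩
  have hcard0 : Nat.card (st13D U S gs C ψj) =
      Nat.card {f : SCC n h // Resolute f ∧ Refines f C ∧ UConsistent U f} :=
    Nat.card_eq_of_bijective _ hbij
  have hA : Nat.card ((r : {r : Profile n h // r ∈ S.filter fun r => StabIn1 U r}) →
      {yz : Fin n × Fin n //
        yz.1 ∈ C r.1 ∧ yz.2 ∈ C (gact gs r.1) ∧ yz.2 ≠ gs.2.1 yz.1}) =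
      ∏ r ∈ S.filter fun r => StabIn1 U r,
        {yz : Fin n × Fin n |
          yz.1 ∈ C r ∧ yz.2 ∈ C (gact gs r) ∧ yz.2 ≠ gs.2.1 yz.1}.ncard := by
    rw [Nat.card_pi, ← Finset.prod_coe_sort (S.filter fun r => StabIn1 U r)
      (fun r => ({yz : Fin n × Fin n |
        yz.1 ∈ C r ∧ yz.2 ∈ C (gact gs r) ∧ yz.2 ≠ gs.2.1 yz.1}).ncard)]
    exact Finset.prod_congr rfl fun rs _ => Nat.card_coe_set_eq _
  have hB : Nat.card ((r : {r : Profile n h // r ∈ S.filter fun r => ¬ StabIn1 U r}) →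
      {a : Fin n // a ∈ C r.1 ∧ ψj r.1 a ≠ a}) =
      ∏ r ∈ S.filter fun r => ¬ StabIn1 U r,
        {a : Fin n | a ∈ C r ∧ ψj r a ≠ a}.ncard := by
    rw [Nat.card_pi, ← Finset.prod_coe_sort (S.filter fun r => ¬ StabIn1 U r)
      (fun r => ({a : Fin n | a ∈ C r ∧ ψj r a ≠ a}).ncard)]
    exact Finset.prod_congr rfl fun rs _ => Nat.card_coe_set_eq _
  have hprod : Nat.card (st13D U S gs C ψj) =
      (∏ r ∈ S.filter fun r => StabIn1 U r,
        {yz : Fin n × Fin n |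
          yz.1 ∈ C r ∧ yz.2 ∈ C (gact gs r) ∧ yz.2 ≠ gs.2.1 yz.1}.ncard) *
      (∏ r ∈ S.filter fun r => ¬ StabIn1 U r,
        {a : Fin n | a ∈ C r ∧ ψj r a ≠ a}.ncard) := by
    rw [← hA, ← hB]
    exact Nat.card_prod _ _
  have hmain := hcard0.symm.trans hprod
  have hpos1 : ∀ r ∈ S.filter fun r => StabIn1 U r,
      0 < {yz : Fin n × Fin n |
        yz.1 ∈ C r ∧ yz.2 ∈ C (gact gs r) ∧ yz.2 ≠ gs.2.1 yz.1}.ncard := fun r _ =>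
    (Set.ncard_pos (Set.toFinite _)).mpr
      (st13A1_nonempty U gs C hC hcons hgs hgs3 r)
  have hpos2 : ∀ r ∈ S.filter fun r => ¬ StabIn1 U r,
      0 < {a : Fin n | a ∈ C r ∧ ψj r a ≠ a}.ncard := by
    intro r hr
    obtain ⟨hrS, hnst⟩ := Finset.mem_filter.mp hr
    exact (Set.ncard_pos (Set.toFinite _)).mpr
      (st13A2_nonempty U C ψj hC hcons hUG hreg hnst (hψj r hrS hnst))
  have hpos : 0 < Nat.card
      {f : SCC n h // Resolute f ∧ Refines f C ∧ UConsistent U f} := by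
    rw [hmain]
    exact Nat.mul_pos (Finset.prod_pos hpos1) (Finset.prod_pos hpos2)
  refine ⟨hmain, hpos, ?_⟩
  have d0 : st13D U S gs C ψj :=
    ⟨fun rs => ⟨(st13A1_nonempty U gs C hC hcons hgs hgs3 rs.1).some,
      (st13A1_nonempty U gs C hC hcons hgs hgs3 rs.1).some_mem⟩,
     fun rs => ⟨(st13A2_nonempty U C ψj hC hcons hUG hreg
        (Finset.mem_filter.mp rs.2).2
        (hψj rs.1 (Finset.mem_filter.mp rs.2).1 (Finset.mem_filter.mp rs.2).2)).some,
      (st13A2_nonempty U C ψj hC hcons hUG hreg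
        (Finset.mem_filter.mp rs.2).2
        (hψj rs.1 (Finset.mem_filter.mp rs.2).1 (Finset.mem_filter.mp rs.2).2)).some_mem⟩⟩
  exact ⟨st13F U S hS gs C ψj hn d0,
    st13F_resolute U S hS gs C ψj hn hUG hreg hψj d0,
    st13F_refines U S hS gs C ψj hn hUG hreg hgs hgs3 hcons hψj d0,
    st13F_consistent U S hS gs C ψj hn hUG hreg hψj d0⟩
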